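/- For all integers x, y not both zero, the value 4x² + 20xy + 4y² is never equal to −2, 0, or 2. -/

import Mathlib

open Real

unseal Nat.sqrt.iter in
lemma sq_ne_21_sq (a b : ℤ) (hb : b ≠ 0) : a ^ 2 ≠ 21 * b ^ 2 := by
  intro h
  have h21 : Irrational (√(21 : ℕ)) := irrational_sqrt_natCast_iff.2 (by decide)
  have hbR : (b : ℝ) ≠ 0 := Int.cast_ne_zero.2 hb
  have hsq : ((a : ℝ) / b) ^ 2 = 21 := by
    field_simp
    exact_mod_cast (h.trans (mul_comm _ _))
  have : √(21 : ℕ) = |(a : ℝ) / b| := by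
    push_cast
    rw [← hsq, Real.sqrt_sq_eq_abs]
  rw [this] at h21
  exact h21 ⟨|(a : ℚ) / b|, by push_cast; ring⟩

/-- For integers x, y not both zero, 4x² + 20xy + 4y² is never −2, 0, or 2. -/
theorem no_vectors_of_square_zero_two_neg_two (x y : ℤ) (h : ¬ (x = 0 ∧ y = 0)) :
    4 * x ^ 2 + 20 * x * y + 4 * y ^ 2 ≠ -2 ∧
    4 * x ^ 2 + 20 * x * y + 4 * y ^ 2 ≠ 0 ∧
    4 * x ^ 2 + 20 * x * y + 4 * y ^ 2 ≠ 2 := by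
  have h4 : 4 * x ^ 2 + 20 * x * y + 4 * y ^ 2 = 4 * (x ^ 2 + 5 * (x * y) + y ^ 2) := by ring
  refine ⟨by omega, ?_, by omega⟩
  intro h0
  rcases eq_or_ne y 0 with hy | hy
  · subst hy
    have : x = 0 := by nlinarith
    exact h ⟨this, rfl⟩
  · exact sq_ne_21_sq (2 * x + 5 * y) y hy (by nlinarith)
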